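/- arXiv:2002.12030 — 6 statements merged into one kernel-verified Lean document; each statement's English description precedes it below -/
import Mathlib

section
/- Let (A,B), (C,D), (E,F) be separations of a graph G such that (A,B) and (C,D) cross. If (E,F) is nested with both (A,B) and (C,D), then (E,F) is nested with every corner separation of (A,B) and (C,D). -/
open Set

universe u

variable {V : Type*}

/-- A separation of a graph `G`: a pair of vertex sets covering `V` with no edge
between `A \ B` and `B \ A`. -/
def IsSep (G : SimpleGraph V) (A B : Set V) : Prop :=
  A ∪ B = Set.univ ∧ ∀ a ∈ A \ B, ∀ b ∈ B \ A, ¬ G.Adj a b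

/-- The order on separations: `(A,B) ≤ (C,D)` iff `A ⊆ C` and `D ⊆ B`. -/
def SepLE (A B C D : Set V) : Prop := A ⊆ C ∧ D ⊆ B

/-- Two separations are nested if one is comparable with the other or its reverse. -/
def Nested (A B C D : Set V) : Prop :=
  SepLE A B C D ∨ SepLE C D A B ∨ SepLE A B D C ∨ SepLE D C A B

/-- A set of separations is consistent. -/
def Consistent (P : Set (Set V × Set V)) : Prop :=
  ∀ A B C D : Set V, (A, B) ∈ P → SepLE C D A B → (D, C) ∉ P

/-- The profile axiom (P2). -/
def P2 (P : Set (Set V × Set V)) : Prop :=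
  ∀ p ∈ P, ∀ q ∈ P, (p.2 ∩ q.2, p.1 ∪ q.1) ∉ P

/-- A profile is principal if every subfamily with equal separators has a common
vertex in the intersection of the big sides minus the small sides. -/
def Principal (P : Set (Set V × Set V)) : Prop :=
  ∀ Q ⊆ P, Q.Nonempty → (∀ p ∈ Q, ∀ q ∈ Q, p.1 ∩ p.2 = q.1 ∩ q.2) →
    (⋂ p ∈ Q, (p.2 \ p.1)).Nonempty

/-- Robustness of a set of separations. -/
def Robust (G : SimpleGraph V) (P : Set (Set V × Set V)) : Prop :=
  ∀ A B : Set V, (A, B) ∈ P → (A ∩ B).Finite →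
    ∀ C D : Set V, IsSep G C D → (C ∩ D).Finite →
      ((B ∩ C) ∩ (A ∪ D)).ncard < (A ∩ B).ncard →
      ((B ∩ D) ∩ (A ∪ C)).ncard < (A ∩ B).ncard →
      ((B ∩ C, A ∪ D) ∉ P ∨ (B ∩ D, A ∪ C) ∉ P)

/-- `C` is a (connected) component of `G - X`. -/
def IsComponent (G : SimpleGraph V) (X C : Set V) : Prop :=
  C.Nonempty ∧ C ⊆ Xᶜ ∧ (G.induce C).Connected ∧
    ∀ D : Set V, C ⊆ D → D ⊆ Xᶜ → (G.induce D).Connected → D = C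

/-- The neighbourhood of a vertex set. -/
def setNbhd (G : SimpleGraph V) (C : Set V) : Set V :=
  {v | v ∉ C ∧ ∃ c ∈ C, G.Adj v c}

/-- A separation `(A,B)` distinguishes two profiles. -/
def Distinguishes (A B : Set V) (P P' : Set (Set V × Set V)) : Prop :=
  ((A, B) ∈ P ∧ (B, A) ∈ P') ∨ ((A, B) ∈ P' ∧ (B, A) ∈ P)

/-- A tree-decomposition of `G` modelled on a tree `T`. -/
structure TreeDecomp (G : SimpleGraph V) {τ : Type*} (T : SimpleGraph τ) where
  bag : τ → Set V
  isTree : T.IsTree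
  covers : ∀ v : V, ∃ t, v ∈ bag t
  coversEdges : ∀ u v : V, G.Adj u v → ∃ t, u ∈ bag t ∧ v ∈ bag t
  pathInter : ∀ t₁ t₂ t₃ : τ, ∀ p : T.Walk t₁ t₃, p.IsPath → t₂ ∈ p.support →
    bag t₁ ∩ bag t₃ ⊆ bag t₂

/-- The union of the bags on the side of `s` of the edge `ss'` of the decomposition tree. -/
def sideSet {G : SimpleGraph V} {τ : Type*} {T : SimpleGraph τ} (td : TreeDecomp G T)
    (s s' : τ) : Set V :=
  ⋃ t ∈ {t | (T.deleteEdges {s(s, s')}).Reachable s t}, td.bag t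

/-- The torso of the part `bag t`, as a graph on `V` whose edges live inside `bag t`. -/
def torso (G : SimpleGraph V) {τ : Type*} (T : SimpleGraph τ) (td : TreeDecomp G T)
    (t : τ) : SimpleGraph V where
  Adj x y := x ≠ y ∧ x ∈ td.bag t ∧ y ∈ td.bag t ∧
    (G.Adj x y ∨ ∃ t', T.Adj t t' ∧ x ∈ td.bag t' ∧ y ∈ td.bag t')
  symm := by
    constructor
    rintro x y ⟨h1, h2, h3, h4⟩
    refine ⟨h1.symm, h3, h2, ?_⟩
    rcases h4 with h | ⟨t', ht, hx, hy⟩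
    · exact Or.inl h.symm
    · exact Or.inr ⟨t', ht, hy, hx⟩
  loopless := by constructor; rintro x ⟨h1, -⟩; exact h1 rfl

/-- The profile induced by an end of `G`: all separations of finite order such that the
component of the complement of the separator in which the end lives is contained in the
big side. -/
def endProfile (G : SimpleGraph V) (e : ↥G.end) : Set (Set V × Set V) :=
  {p | IsSep G p.1 p.2 ∧ ∃ hf : (p.1 ∩ p.2).Finite,
    ((e.val (Opposite.op hf.toFinset)).supp ⊆ p.2)}


/-- if `(E,F)` is nested with two crossing separations `(A,B)` and `(C,D)`,
then it is nested with every corner separation of them. -/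
theorem nested_with_all_corners (G : SimpleGraph V) (A B C D E F : Set V)
    (hAB : IsSep G A B) (hCD : IsSep G C D) (hEF : IsSep G E F)
    (hcross : ¬ Nested A B C D)
    (h1 : Nested E F A B) (h2 : Nested E F C D) :
    Nested E F (A ∩ C) (B ∪ D) ∧ Nested E F (A ∩ D) (B ∪ C) ∧
    Nested E F (B ∩ C) (A ∪ D) ∧ Nested E F (B ∩ D) (A ∪ C) := by
  have sul : ∀ s t : Set V, s ⊆ s ∪ t := fun s t => Set.subset_union_left
  have sur : ∀ s t : Set V, t ⊆ s ∪ t := fun s t => Set.subset_union_right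
  have sil : ∀ s t : Set V, s ∩ t ⊆ s := fun s t => Set.inter_subset_left
  have sir : ∀ s t : Set V, s ∩ t ⊆ t := fun s t => Set.inter_subset_right
  obtain ⟨hEA, hBF⟩ | ⟨hAE, hFB⟩ | ⟨hEB, hAF⟩ | ⟨hBE, hFA⟩ := h1 <;>
    obtain ⟨hEC, hDF⟩ | ⟨hCE, hFD⟩ | ⟨hED, hCF⟩ | ⟨hDE, hFC⟩ := h2
  -- (E⊆A,B⊆F) & (E⊆C,D⊆F)
  · exact ⟨Or.inl ⟨Set.subset_inter hEA hEC, Set.union_subset hBF hDF⟩,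
      Or.inr (Or.inr (Or.inl ⟨hEC.trans (sur B C), (sir A D).trans hDF⟩)),
      Or.inr (Or.inr (Or.inl ⟨hEA.trans (sul A D), (sil B C).trans hBF⟩)),
      Or.inr (Or.inr (Or.inl ⟨hEA.trans (sul A C), (sil B D).trans hBF⟩))⟩
  -- (E⊆A,B⊆F) & (C⊆E,F⊆D) : C⊆A, B⊆D, crossing contradiction
  · exact absurd (Or.inr (Or.inl ⟨hCE.trans hEA, hBF.trans hFD⟩)) hcross
  -- (E⊆A,B⊆F) & (E⊆D,C⊆F)
  · exact ⟨Or.inr (Or.inr (Or.inl ⟨hED.trans (sur B D), (sir A C).trans hCF⟩)),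
      Or.inl ⟨Set.subset_inter hEA hED, Set.union_subset hBF hCF⟩,
      Or.inr (Or.inr (Or.inl ⟨hED.trans (sur A D), (sir B C).trans hCF⟩)),
      Or.inr (Or.inr (Or.inl ⟨hEA.trans (sul A C), (sil B D).trans hBF⟩))⟩
  -- (E⊆A,B⊆F) & (D⊆E,F⊆C) : D⊆A, B⊆C
  · exact absurd (Or.inr (Or.inr (Or.inr ⟨hDE.trans hEA, hBF.trans hFC⟩))) hcross
  -- (A⊆E,F⊆B) & (E⊆C,D⊆F) : A⊆C, D⊆B
  · exact absurd (Or.inl ⟨hAE.trans hEC, hDF.trans hFB⟩) hcross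
  -- (A⊆E,F⊆B) & (C⊆E,F⊆D)
  · exact ⟨Or.inr (Or.inl ⟨(sil A C).trans hAE, hFB.trans (sul B D)⟩),
      Or.inr (Or.inl ⟨(sil A D).trans hAE, hFB.trans (sul B C)⟩),
      Or.inr (Or.inl ⟨(sir B C).trans hCE, hFD.trans (sur A D)⟩),
      Or.inr (Or.inr (Or.inr ⟨Set.union_subset hAE hCE, Set.subset_inter hFB hFD⟩))⟩
  -- (A⊆E,F⊆B) & (E⊆D,C⊆F) : A⊆D, C⊆B
  · exact absurd (Or.inr (Or.inr (Or.inl ⟨hAE.trans hED, hCF.trans hFB⟩))) hcross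
  -- (A⊆E,F⊆B) & (D⊆E,F⊆C)
  · exact ⟨Or.inr (Or.inl ⟨(sil A C).trans hAE, hFB.trans (sul B D)⟩),
      Or.inr (Or.inl ⟨(sir A D).trans hDE, hFC.trans (sur B C)⟩),
      Or.inr (Or.inr (Or.inr ⟨Set.union_subset hAE hDE, Set.subset_inter hFB hFC⟩)),
      Or.inr (Or.inl ⟨(sir B D).trans hDE, hFC.trans (sur A C)⟩)⟩
  -- (E⊆B,A⊆F) & (E⊆C,D⊆F)
  · exact ⟨Or.inr (Or.inr (Or.inl ⟨hEB.trans (sul B D), (sil A C).trans hAF⟩)),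
      Or.inr (Or.inr (Or.inl ⟨hEC.trans (sur B C), (sil A D).trans hAF⟩)),
      Or.inl ⟨Set.subset_inter hEB hEC, Set.union_subset hAF hDF⟩,
      Or.inr (Or.inr (Or.inl ⟨hEC.trans (sur A C), (sir B D).trans hDF⟩))⟩
  -- (E⊆B,A⊆F) & (C⊆E,F⊆D) : C⊆B, A⊆D
  · exact absurd (Or.inr (Or.inr (Or.inl ⟨hAF.trans hFD, hCE.trans hEB⟩))) hcross
  -- (E⊆B,A⊆F) & (E⊆D,C⊆F)
  · exact ⟨Or.inr (Or.inr (Or.inl ⟨hEB.trans (sul B D), (sil A C).trans hAF⟩)),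
      Or.inr (Or.inr (Or.inl ⟨hEB.trans (sul B C), (sil A D).trans hAF⟩)),
      Or.inr (Or.inr (Or.inl ⟨hED.trans (sur A D), (sir B C).trans hCF⟩)),
      Or.inl ⟨Set.subset_inter hEB hED, Set.union_subset hAF hCF⟩⟩
  -- (E⊆B,A⊆F) & (D⊆E,F⊆C) : D⊆B, A⊆C
  · exact absurd (Or.inl ⟨hAF.trans hFC, hDE.trans hEB⟩) hcross
  -- (B⊆E,F⊆A) & (E⊆C,D⊆F) : B⊆C, D⊆A
  · exact absurd (Or.inr (Or.inr (Or.inr ⟨hDF.trans hFA, hBE.trans hEC⟩))) hcross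
  -- (B⊆E,F⊆A) & (C⊆E,F⊆D)
  · exact ⟨Or.inr (Or.inl ⟨(sir A C).trans hCE, hFD.trans (sur B D)⟩),
      Or.inr (Or.inr (Or.inr ⟨Set.union_subset hBE hCE, Set.subset_inter hFA hFD⟩)),
      Or.inr (Or.inl ⟨(sil B C).trans hBE, hFA.trans (sul A D)⟩),
      Or.inr (Or.inl ⟨(sil B D).trans hBE, hFA.trans (sul A C)⟩)⟩
  -- (B⊆E,F⊆A) & (E⊆D,C⊆F) : B⊆D, C⊆A
  · exact absurd (Or.inr (Or.inl ⟨hCF.trans hFA, hBE.trans hED⟩)) hcross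
  -- (B⊆E,F⊆A) & (D⊆E,F⊆C)
  · exact ⟨Or.inr (Or.inr (Or.inr ⟨Set.union_subset hBE hDE, Set.subset_inter hFA hFC⟩)),
      Or.inr (Or.inl ⟨(sir A D).trans hDE, hFC.trans (sur B C)⟩),
      Or.inr (Or.inl ⟨(sil B C).trans hBE, hFA.trans (sul A D)⟩),
      Or.inr (Or.inl ⟨(sil B D).trans hBE, hFA.trans (sul A C)⟩)⟩
end

section
/- Let (A,B) and (C,D) be two crossing separations of a graph G, let S be a set of separations of G, and let (X₁,Y₁) and (X₂,Y₂) be two opposite corner separations of (A,B) and (C,D). Then (i) every separation in S crossing both (X₁,Y₁) and (X₂,Y₂) crosses both (A,B) and (C,D); and (ii) the set of separations in S crossing (X₁,Y₁) or (X₂,Y₂) is a proper subset of the set of separations in S ∪ {(A,B),(C,D)} crossing (A,B) or (C,D), provided (A,B) ∈ S. In particular, if all these sets are finite, then c_S(X₁,Y₁) + c_S(X₂,Y₂) < c_S(A,B) + c_S(C,D), where c_S denotes the number of separations in S crossing the given separation. -/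
open Set

universe u

variable {V : Type*}

/-- The set of separations in `S` crossing `(A,B)`. -/
def CrossSet (S : Set (Set V × Set V)) (A B : Set V) : Set (Set V × Set V) :=
  {p ∈ S | ¬ Nested A B p.1 p.2}


lemma nested_comm (A B C D : Set V) : Nested A B C D ↔ Nested C D A B := by
  unfold Nested SepLE; tauto

lemma nested_swap_right (A B C D : Set V) : Nested A B C D ↔ Nested A B D C := by
  unfold Nested SepLE; tauto

lemma nested_swap_left (A B C D : Set V) : Nested A B C D ↔ Nested B A C D := by
  unfold Nested SepLE; tauto

lemma nested_one (A B C D E F : Set V) (h : Nested E F A B) :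
    Nested E F (A ∩ C) (B ∪ D) ∨ Nested E F (B ∩ D) (A ∪ C) := by
  rcases h with ⟨h1, h2⟩ | ⟨h1, h2⟩ | ⟨h1, h2⟩ | ⟨h1, h2⟩
  · exact Or.inr (Or.inr (Or.inr (Or.inl
      ⟨h1.trans Set.subset_union_left, Set.inter_subset_left.trans h2⟩)))
  · exact Or.inl (Or.inr (Or.inl
      ⟨Set.inter_subset_left.trans h1, h2.trans Set.subset_union_left⟩))
  · exact Or.inl (Or.inr (Or.inr (Or.inl
      ⟨h1.trans Set.subset_union_left, Set.inter_subset_left.trans h2⟩)))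
  · exact Or.inr (Or.inr (Or.inl
      ⟨Set.inter_subset_left.trans h1, h2.trans Set.subset_union_left⟩))

lemma nested_both (A B C D E F : Set V) (hcross : ¬ Nested A B C D)
    (h1 : Nested E F A B) (h2 : Nested E F C D) :
    Nested E F (A ∩ C) (B ∪ D) := by
  rcases h1 with ⟨h1a, h1b⟩ | ⟨h1a, h1b⟩ | ⟨h1a, h1b⟩ | ⟨h1a, h1b⟩ <;>
    rcases h2 with ⟨h2a, h2b⟩ | ⟨h2a, h2b⟩ | ⟨h2a, h2b⟩ | ⟨h2a, h2b⟩
  · exact Or.inl ⟨Set.subset_inter h1a h2a, Set.union_subset h1b h2b⟩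
  · exact Or.inr (Or.inl ⟨Set.inter_subset_right.trans h2a, h2b.trans Set.subset_union_right⟩)
  · exact Or.inr (Or.inr (Or.inl ⟨h2a.trans Set.subset_union_right,
      Set.inter_subset_right.trans h2b⟩))
  · exact absurd (Or.inr (Or.inr (Or.inr ⟨h2a.trans h1a, h1b.trans h2b⟩))) hcross
  · exact absurd (Or.inl ⟨h1a.trans h2a, h2b.trans h1b⟩) hcross
  · exact Or.inr (Or.inl ⟨Set.inter_subset_left.trans h1a, h2b.trans Set.subset_union_right⟩)
  · exact absurd (Or.inr (Or.inr (Or.inl ⟨h1a.trans h2a, h2b.trans h1b⟩))) hcross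
  · exact Or.inr (Or.inl ⟨Set.inter_subset_left.trans h1a, h1b.trans Set.subset_union_left⟩)
  · exact Or.inr (Or.inr (Or.inl ⟨h1a.trans Set.subset_union_left,
      Set.inter_subset_left.trans h1b⟩))
  · exact absurd (Or.inr (Or.inr (Or.inl ⟨h1b.trans h2b, h2a.trans h1a⟩))) hcross
  · exact Or.inr (Or.inr (Or.inl ⟨h2a.trans Set.subset_union_right,
      Set.inter_subset_left.trans h1b⟩))
  · exact absurd (Or.inl ⟨h1b.trans h2b, h2a.trans h1a⟩) hcross
  · exact absurd (Or.inr (Or.inr (Or.inr ⟨h2b.trans h1b, h1a.trans h2a⟩))) hcross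
  · exact Or.inr (Or.inl ⟨Set.inter_subset_right.trans h2a, h2b.trans Set.subset_union_right⟩)
  · exact absurd (Or.inr (Or.inl ⟨h2b.trans h1b, h1a.trans h2a⟩)) hcross
  · exact Or.inr (Or.inr (Or.inr ⟨Set.union_subset h1a h2a, Set.subset_inter h1b h2b⟩))

lemma crossSet_aux (A B C D X₁ Y₁ X₂ Y₂ : Set V) (hcross : ¬ Nested A B C D)
    (S : Set (Set V × Set V))
    (ha : ∀ E F : Set V, Nested E F A B → Nested E F X₁ Y₁ ∨ Nested E F X₂ Y₂)
    (hb : ∀ E F : Set V, Nested E F C D → Nested E F X₁ Y₁ ∨ Nested E F X₂ Y₂)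
    (hc : ∀ E F : Set V, Nested E F A B → Nested E F C D →
      Nested E F X₁ Y₁ ∧ Nested E F X₂ Y₂)
    (hd1 : Nested X₁ Y₁ A B) (hd2 : Nested X₂ Y₂ A B)
    (hd3 : Nested X₁ Y₁ C D) (hd4 : Nested X₂ Y₂ C D) :
    (CrossSet S X₁ Y₁ ∩ CrossSet S X₂ Y₂ ⊆ CrossSet S A B ∩ CrossSet S C D) ∧
    ((A, B) ∈ S → CrossSet S X₁ Y₁ ∪ CrossSet S X₂ Y₂ ⊂
      CrossSet (S ∪ {(A, B), (C, D)}) A B ∪ CrossSet (S ∪ {(A, B), (C, D)}) C D) ∧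
    ((A, B) ∈ S → (CrossSet S A B).Finite → (CrossSet S C D).Finite →
      (CrossSet S X₁ Y₁).ncard + (CrossSet S X₂ Y₂).ncard
        < (CrossSet S A B).ncard + (CrossSet S C D).ncard) := by
  have hpart1 : CrossSet S X₁ Y₁ ∩ CrossSet S X₂ Y₂ ⊆ CrossSet S A B ∩ CrossSet S C D := by
    rintro p ⟨hp1, hp2⟩
    have hpS : p ∈ S := hp1.1
    have hn1 : ¬ Nested X₁ Y₁ p.1 p.2 := hp1.2
    have hn2 : ¬ Nested X₂ Y₂ p.1 p.2 := hp2.2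
    have hAB : ¬ Nested A B p.1 p.2 := by
      intro h
      rcases ha p.1 p.2 ((nested_comm _ _ _ _).mp h) with h' | h'
      · exact hn1 ((nested_comm _ _ _ _).mp h')
      · exact hn2 ((nested_comm _ _ _ _).mp h')
    have hCD : ¬ Nested C D p.1 p.2 := by
      intro h
      rcases hb p.1 p.2 ((nested_comm _ _ _ _).mp h) with h' | h'
      · exact hn1 ((nested_comm _ _ _ _).mp h')
      · exact hn2 ((nested_comm _ _ _ _).mp h')
    exact ⟨⟨hpS, hAB⟩, ⟨hpS, hCD⟩⟩
  have hsub : CrossSet S X₁ Y₁ ∪ CrossSet S X₂ Y₂ ⊆ CrossSet S A B ∪ CrossSet S C D := by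
    rintro p (hp | hp)
    · by_cases hAB : Nested A B p.1 p.2
      · by_cases hCD : Nested C D p.1 p.2
        · exact absurd ((nested_comm _ _ _ _).mp
            (hc p.1 p.2 ((nested_comm _ _ _ _).mp hAB) ((nested_comm _ _ _ _).mp hCD)).1)
            hp.2
        · exact Or.inr ⟨hp.1, hCD⟩
      · exact Or.inl ⟨hp.1, hAB⟩
    · by_cases hAB : Nested A B p.1 p.2
      · by_cases hCD : Nested C D p.1 p.2
        · exact absurd ((nested_comm _ _ _ _).mp
            (hc p.1 p.2 ((nested_comm _ _ _ _).mp hAB) ((nested_comm _ _ _ _).mp hCD)).2)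
            hp.2
        · exact Or.inr ⟨hp.1, hCD⟩
      · exact Or.inl ⟨hp.1, hAB⟩
  have hCDnotin : (C, D) ∉ CrossSet S X₁ Y₁ ∪ CrossSet S X₂ Y₂ := by
    rintro (h | h)
    · exact h.2 hd3
    · exact h.2 hd4
  have hABnotin : (A, B) ∉ CrossSet S X₁ Y₁ ∪ CrossSet S X₂ Y₂ := by
    rintro (h | h)
    · exact h.2 hd1
    · exact h.2 hd2
  have hcross' : ¬ Nested C D A B := fun h => hcross ((nested_comm _ _ _ _).mpr h)
  refine ⟨hpart1, ?_, ?_⟩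
  · intro _
    have hsub' : CrossSet S X₁ Y₁ ∪ CrossSet S X₂ Y₂ ⊆
        CrossSet (S ∪ {(A, B), (C, D)}) A B ∪ CrossSet (S ∪ {(A, B), (C, D)}) C D := by
      intro p hp
      rcases hsub hp with ⟨hpS, h⟩ | ⟨hpS, h⟩
      · exact Or.inl ⟨Or.inl hpS, h⟩
      · exact Or.inr ⟨Or.inl hpS, h⟩
    rw [Set.ssubset_iff_of_subset hsub']
    refine ⟨(C, D), Or.inl ⟨Or.inr (by simp), hcross⟩, hCDnotin⟩
  · intro hABS hfinAB hfinCD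
    have hfinU : (CrossSet S A B ∪ CrossSet S C D).Finite := hfinAB.union hfinCD
    have hfinP : (CrossSet S X₁ Y₁).Finite :=
      (hfinU.subset hsub).subset Set.subset_union_left
    have hfinQ : (CrossSet S X₂ Y₂).Finite :=
      (hfinU.subset hsub).subset Set.subset_union_right
    have hss : CrossSet S X₁ Y₁ ∪ CrossSet S X₂ Y₂ ⊂ CrossSet S A B ∪ CrossSet S C D := by
      rw [Set.ssubset_iff_of_subset hsub]
      exact ⟨(A, B), Or.inr ⟨hABS, hcross'⟩, hABnotin⟩
    have h1 : (CrossSet S X₁ Y₁ ∪ CrossSet S X₂ Y₂).ncard <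
        (CrossSet S A B ∪ CrossSet S C D).ncard := Set.ncard_lt_ncard hss hfinU
    have h2 : (CrossSet S X₁ Y₁ ∩ CrossSet S X₂ Y₂).ncard ≤
        (CrossSet S A B ∩ CrossSet S C D).ncard :=
      Set.ncard_le_ncard hpart1 (hfinAB.subset Set.inter_subset_left)
    have e1 := Set.ncard_union_add_ncard_inter (CrossSet S X₁ Y₁) (CrossSet S X₂ Y₂) hfinP hfinQ
    have e2 := Set.ncard_union_add_ncard_inter (CrossSet S A B) (CrossSet S C D) hfinAB hfinCD
    omega

/-- corner separations cross fewer separations than the crossing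
separations they come from. -/
theorem corner_crossing (G : SimpleGraph V) (A B C D : Set V)
    (hAB : IsSep G A B) (hCD : IsSep G C D) (hcross : ¬ Nested A B C D)
    (S : Set (Set V × Set V)) (hS : ∀ p ∈ S, IsSep G p.1 p.2)
    (X₁ Y₁ X₂ Y₂ : Set V)
    (hopp : ((X₁, Y₁) = (A ∩ C, B ∪ D) ∧ (X₂, Y₂) = (B ∩ D, A ∪ C)) ∨
            ((X₁, Y₁) = (A ∩ D, B ∪ C) ∧ (X₂, Y₂) = (B ∩ C, A ∪ D))) :
    (CrossSet S X₁ Y₁ ∩ CrossSet S X₂ Y₂ ⊆ CrossSet S A B ∩ CrossSet S C D) ∧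
    ((A, B) ∈ S → CrossSet S X₁ Y₁ ∪ CrossSet S X₂ Y₂ ⊂
      CrossSet (S ∪ {(A, B), (C, D)}) A B ∪ CrossSet (S ∪ {(A, B), (C, D)}) C D) ∧
    ((A, B) ∈ S → (CrossSet S A B).Finite → (CrossSet S C D).Finite →
      (CrossSet S X₁ Y₁).ncard + (CrossSet S X₂ Y₂).ncard
        < (CrossSet S A B).ncard + (CrossSet S C D).ncard) := by
  rcases hopp with ⟨hx, hy⟩ | ⟨hx, hy⟩ <;>
    (rw [Prod.mk.injEq] at hx hy; obtain ⟨rfl, rfl⟩ := hx; obtain ⟨rfl, rfl⟩ := hy)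
  · refine crossSet_aux A B C D _ _ _ _ hcross S
      (fun E F h => nested_one A B C D E F h)
      (fun E F h => by
        have := nested_one C D A B E F h
        rwa [Set.inter_comm C A, Set.union_comm D B, Set.inter_comm D B,
          Set.union_comm C A] at this)
      (fun E F h1 h2 => ⟨nested_both A B C D E F hcross h1 h2,
        nested_both B A D C E F
          (fun hn => hcross ((nested_swap_right A B C D).mpr
            ((nested_swap_left A B D C).mpr hn)))
          ((nested_swap_right E F A B).mp h1) ((nested_swap_right E F C D).mp h2)⟩)
      (Or.inl ⟨Set.inter_subset_left, Set.subset_union_left⟩)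
      (Or.inr (Or.inr (Or.inl ⟨Set.inter_subset_left, Set.subset_union_left⟩)))
      (Or.inl ⟨Set.inter_subset_right, Set.subset_union_right⟩)
      (Or.inr (Or.inr (Or.inl ⟨Set.inter_subset_right, Set.subset_union_right⟩)))
  · refine crossSet_aux A B C D _ _ _ _ hcross S
      (fun E F h => nested_one A B D C E F h)
      (fun E F h => by
        have := nested_one D C A B E F ((nested_swap_right E F C D).mp h)
        rwa [Set.inter_comm D A, Set.union_comm C B, Set.inter_comm C B,
          Set.union_comm D A] at this)
      (fun E F h1 h2 => ⟨nested_both A B D C E F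
          (fun hn => hcross ((nested_swap_right A B C D).mpr hn))
          h1 ((nested_swap_right E F C D).mp h2),
        nested_both B A C D E F
          (fun hn => hcross ((nested_swap_left A B C D).mpr hn))
          ((nested_swap_right E F A B).mp h1) h2⟩)
      (Or.inl ⟨Set.inter_subset_left, Set.subset_union_left⟩)
      (Or.inr (Or.inr (Or.inl ⟨Set.inter_subset_left, Set.subset_union_left⟩)))
      (Or.inr (Or.inr (Or.inl ⟨Set.inter_subset_right, Set.subset_union_right⟩)))
      (Or.inl ⟨Set.inter_subset_right, Set.subset_union_right⟩)
end

section
/- For every end ω of a graph G, the set P_ω of all separations (A,B) of finite order such that ω lies in a component of G−(A∩B) contained in B, is a robust principal profile of G. -/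
open Set

universe u

variable {V : Type*}

lemma end_supp_mono (G : SimpleGraph V) (e : ↥G.end) {K L : Finset V} (h : K ⊆ L) :
    (e.val (Opposite.op L)).supp ⊆ (e.val (Opposite.op K)).supp := by
  have h2 := e.prop (CategoryTheory.homOfLE h).op
  rw [← h2, SimpleGraph.componentComplFunctor_map]
  exact SimpleGraph.ComponentCompl.subset_hom _ (by simpa using h)

lemma end_supp_nonempty (G : SimpleGraph V) (e : ↥G.end) (K : Finset V) :
    (e.val (Opposite.op K)).supp.Nonempty :=
  (e.val (Opposite.op K)).nonempty

lemma end_supp_not_mem (G : SimpleGraph V) (e : ↥G.end) (K : Finset V) {v : V}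
    (hv : v ∈ (e.val (Opposite.op K)).supp) : v ∉ (K : Set V) := hv.choose

/-- Key lemma: if `(A,B)` is in the end profile and `L` is a finite set containing the
separator, then the component of the end outside `L` lies in `B \ A`. -/
lemma end_supp_subset_of_mem (G : SimpleGraph V) (e : ↥G.end) {A B : Set V}
    (h : (A, B) ∈ endProfile G e) {L : Finset V} (hL : A ∩ B ⊆ (L : Set V)) :
    (e.val (Opposite.op L)).supp ⊆ B \ A := by
  obtain ⟨-, hf, hsupp⟩ := h
  have hKL : hf.toFinset ⊆ L := by
    intro x hx
    have : x ∈ A ∩ B := by simpa using hx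
    exact_mod_cast hL this
  intro x hx
  have hxB : x ∈ B := hsupp (end_supp_mono G e hKL hx)
  have hxL : x ∉ (L : Set V) := end_supp_not_mem G e L hx
  exact ⟨hxB, fun hxA => hxL (hL ⟨hxA, hxB⟩)⟩

/-- for every end `e` of `G`, the induced set of separations `endProfile G e`
is a robust principal profile. -/
theorem endProfile_is_robust_principal_profile (G : SimpleGraph V) (e : ↥G.end) :
    (∀ p ∈ endProfile G e, IsSep G p.1 p.2 ∧ (p.1 ∩ p.2).Finite) ∧
    Consistent (endProfile G e) ∧ P2 (endProfile G e) ∧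
    Principal (endProfile G e) ∧ Robust G (endProfile G e) := by
  classical
  have mem_fin : ∀ p ∈ endProfile G e, IsSep G p.1 p.2 ∧ (p.1 ∩ p.2).Finite := by
    rintro p ⟨hsep, hf, -⟩
    exact ⟨hsep, hf⟩
  refine ⟨mem_fin, ?_, ?_, ?_, ?_⟩
  · -- Consistent
    rintro A B C D hAB ⟨hCA, hBD⟩ hDC
    have h1 : (A ∩ B).Finite := (mem_fin _ hAB).2
    have h2 : (D ∩ C).Finite := (mem_fin _ hDC).2
    have hfin : ((A ∩ B) ∪ (D ∩ C)).Finite := h1.union h2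
    set L := hfin.toFinset with hLdef
    have hL1 : A ∩ B ⊆ (L : Set V) := fun y hy => by
      rw [hLdef, Set.Finite.coe_toFinset]; exact Or.inl hy
    have hL2 : D ∩ C ⊆ (L : Set V) := fun y hy => by
      rw [hLdef, Set.Finite.coe_toFinset]; exact Or.inr hy
    obtain ⟨x, hx⟩ := end_supp_nonempty G e L
    have hx1 := end_supp_subset_of_mem G e hAB hL1 hx
    have hx2 := end_supp_subset_of_mem G e hDC hL2 hx
    exact hx1.2 (hCA hx2.1)
  · -- P2
    rintro ⟨A, B⟩ hAB ⟨C, D⟩ hCD hbad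
    have h1 : (A ∩ B).Finite := (mem_fin _ hAB).2
    have h2 : (C ∩ D).Finite := (mem_fin _ hCD).2
    have h3 : ((B ∩ D) ∩ (A ∪ C)).Finite := (mem_fin _ hbad).2
    have hfin : ((A ∩ B) ∪ ((C ∩ D) ∪ ((B ∩ D) ∩ (A ∪ C)))).Finite :=
      h1.union (h2.union h3)
    set L := hfin.toFinset with hLdef
    have hL1 : A ∩ B ⊆ (L : Set V) := fun y hy => by
      rw [hLdef, Set.Finite.coe_toFinset]; exact Or.inl hy
    have hL2 : C ∩ D ⊆ (L : Set V) := fun y hy => by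
      rw [hLdef, Set.Finite.coe_toFinset]; exact Or.inr (Or.inl hy)
    have hL3 : ((B ∩ D) ∩ (A ∪ C)) ⊆ (L : Set V) := fun y hy => by
      rw [hLdef, Set.Finite.coe_toFinset]; exact Or.inr (Or.inr hy)
    obtain ⟨x, hx⟩ := end_supp_nonempty G e L
    have hx1 := end_supp_subset_of_mem G e hAB hL1 hx
    have hx2 := end_supp_subset_of_mem G e hCD hL2 hx
    have hx3 := end_supp_subset_of_mem G e hbad hL3 hx
    exact hx3.2 ⟨hx1.1, hx2.1⟩
  · -- Principal
    rintro Q hQP ⟨p₀, hp₀⟩ hsep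
    obtain ⟨-, hf, -⟩ := hQP hp₀
    obtain ⟨x, hx⟩ := end_supp_nonempty G e hf.toFinset
    refine ⟨x, ?_⟩
    simp only [Set.mem_iInter]
    intro p hp
    have hS : p.1 ∩ p.2 ⊆ (hf.toFinset : Set V) := by
      rw [Set.Finite.coe_toFinset, hsep p hp p₀ hp₀]
    exact end_supp_subset_of_mem G e (hQP hp) hS hx
  · -- Robust
    intro A B hAB hABf C D hCD hCDf hc1 hc2
    by_contra hcon
    push_neg at hcon
    obtain ⟨hP1, hP2⟩ := hcon
    have h1 : (A ∩ B).Finite := (mem_fin _ hAB).2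
    have h2 : ((B ∩ C) ∩ (A ∪ D)).Finite := (mem_fin _ hP1).2
    have h3 : ((B ∩ D) ∩ (A ∪ C)).Finite := (mem_fin _ hP2).2
    have hfin : ((A ∩ B) ∪ (((B ∩ C) ∩ (A ∪ D)) ∪ ((B ∩ D) ∩ (A ∪ C)))).Finite :=
      h1.union (h2.union h3)
    set L := hfin.toFinset with hLdef
    have hL1 : A ∩ B ⊆ (L : Set V) := fun y hy => by
      rw [hLdef, Set.Finite.coe_toFinset]; exact Or.inl hy
    have hL2 : ((B ∩ C) ∩ (A ∪ D)) ⊆ (L : Set V) := fun y hy => by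
      rw [hLdef, Set.Finite.coe_toFinset]; exact Or.inr (Or.inl hy)
    have hL3 : ((B ∩ D) ∩ (A ∪ C)) ⊆ (L : Set V) := fun y hy => by
      rw [hLdef, Set.Finite.coe_toFinset]; exact Or.inr (Or.inr hy)
    obtain ⟨x, hx⟩ := end_supp_nonempty G e L
    have hx1 := end_supp_subset_of_mem G e hAB hL1 hx
    have hx2 := end_supp_subset_of_mem G e hP1 hL2 hx
    have hx3 := end_supp_subset_of_mem G e hP2 hL3 hx
    -- x ∈ B, x ∉ A, x ∈ A ∪ D so x ∈ D, x ∈ A ∪ C so x ∈ C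
    have hxB : x ∈ B := hx1.1
    have hxA : x ∉ A := hx1.2
    have hxC : x ∈ C := by
      rcases hx3.1 with h | h
      · exact absurd h hxA
      · exact h
    exact hx2.2 (Set.mem_inter hxB hxC)
end

section
/- Let G be a well-separable graph with respect to a set P of principal k-profiles, let P₁,P₂ ∈ P, and let (A,B) be a separation of minimal order κ(P,G) distinguishing P₁ and P₂ efficiently. Then there is a component X of G[A∖B] such that the separation (X ∪ N(X), V(G)∖X) also distinguishes P₁ and P₂ efficiently. -/
open Set

universe u

variable {V : Type*}

/-- Hom from an induced subgraph into the ambient graph. -/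
def myInducedHom (G : SimpleGraph V) (s : Set V) : G.induce s →g G where
  toFun := Subtype.val
  map_rel' := fun h => h

lemma reachable_induce_of_walk (G : SimpleGraph V) {C : Set V} {a b : V} (W : G.Walk a b)
    (hW : ∀ w ∈ W.support, w ∈ C) :
    (G.induce C).Reachable ⟨a, hW a W.start_mem_support⟩ ⟨b, hW b W.end_mem_support⟩ := by
  induction W with
  | nil => exact SimpleGraph.Reachable.refl _
  | @cons u c b h p ih =>
      have hu : u ∈ C := hW u (by simp)
      have hc : c ∈ C := hW c (by simp)
      have h1 : (G.induce C).Adj ⟨u, hu⟩ ⟨c, hc⟩ := h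
      exact h1.reachable.trans (ih fun w hw => hW w (by simp [hw]))

lemma walk_stays {G' : SimpleGraph V} {P : V → Prop}
    (hP : ∀ x y, P x → G'.Adj x y → P y) {a b : V} (W : G'.Walk a b) (ha : P a) : P b := by
  induction W with
  | nil => exact ha
  | @cons u c b h p ih => exact ih (hP u c ha h)

lemma exists_component (G : SimpleGraph V) (S : Set V) {v : V} (hv : v ∉ S) :
    ∃ C : Set V, IsComponent G S C ∧ v ∈ C ∧ setNbhd G C ⊆ S := by
  classical
  set H := G.induce Sᶜ with hH
  set K := H.connectedComponentMk ⟨v, hv⟩ with hK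
  set C : Set V := Subtype.val '' K.supp with hC
  have hvK : (⟨v, hv⟩ : ↥(Sᶜ)) ∈ K.supp := by
    simp [SimpleGraph.ConnectedComponent.mem_supp_iff, hK]
  have hvC : v ∈ C := ⟨⟨v, hv⟩, hvK, rfl⟩
  have hCs : C ⊆ Sᶜ := by rintro _ ⟨⟨w, hw⟩, -, rfl⟩; exact hw
  -- membership transfer
  have hmemC : ∀ (w : ↥(Sᶜ)), H.Reachable w ⟨v, hv⟩ → (w : V) ∈ C := by
    intro w hr
    exact ⟨w, by simp [SimpleGraph.ConnectedComponent.mem_supp_iff, hK,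
      SimpleGraph.ConnectedComponent.eq, hr], rfl⟩
  have hconn : (G.induce C).Connected := by
    rw [SimpleGraph.connected_iff]
    refine ⟨?_, ⟨⟨v, hvC⟩⟩⟩
    intro u w
    revert u w
    rintro ⟨x, hx⟩ ⟨y, hy⟩
    obtain ⟨ax, haxK, rfl⟩ := hx
    obtain ⟨ay, hayK, rfl⟩ := hy
    rw [SimpleGraph.ConnectedComponent.mem_supp_iff] at haxK hayK
    have hr : H.Reachable ax ay := by
      rw [← SimpleGraph.ConnectedComponent.eq, haxK, hayK]
    obtain ⟨W⟩ := hr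
    have hsupp : ∀ w ∈ W.support, H.connectedComponentMk w = K := by
      intro w hw
      have : H.Reachable ax w := ⟨W.takeUntil w hw⟩
      rw [← haxK, SimpleGraph.ConnectedComponent.eq]
      exact this.symm
    have hWsupp : ∀ z ∈ (W.map (myInducedHom G Sᶜ)).support, z ∈ C := by
      intro z hz
      rw [SimpleGraph.Walk.support_map, List.mem_map] at hz
      obtain ⟨w, hw, rfl⟩ := hz
      exact ⟨w, (SimpleGraph.ConnectedComponent.mem_supp_iff _ _).2 (hsupp w hw), rfl⟩
    exact reachable_induce_of_walk G (W.map (myInducedHom G Sᶜ)) hWsupp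
  refine ⟨C, ⟨⟨v, hvC⟩, hCs, hconn, ?_⟩, hvC, ?_⟩
  · intro D hCD hDS hDconn
    refine Set.Subset.antisymm ?_ hCD
    intro d hd
    have hr : (G.induce D).Reachable ⟨d, hd⟩ ⟨v, hCD hvC⟩ := hDconn.preconnected _ _
    have hr2 : H.Reachable ⟨d, hDS hd⟩ ⟨v, hv⟩ := by
      have := hr.map (G.induceHomOfLE hDS).toHom
      exact this
    exact hmemC ⟨d, hDS hd⟩ hr2
  · rintro a ⟨haC, c, hcC, hadj⟩
    by_contra haS
    obtain ⟨⟨c', hc'⟩, hcK, rfl⟩ := hcC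
    have hadj' : H.Adj ⟨a, haS⟩ ⟨c', hc'⟩ := hadj
    exact haC (hmemC ⟨a, haS⟩ (hadj'.reachable.trans (by
      rw [SimpleGraph.ConnectedComponent.mem_supp_iff] at hcK
      rw [← SimpleGraph.ConnectedComponent.eq, hcK, hK])))

lemma side_of_component {G : SimpleGraph V} {A B : Set V} (hAB : IsSep G A B) {C : Set V}
    (hCs : C ⊆ (A ∩ B)ᶜ) (hconn : (G.induce C).Connected) {v : V} (hv : v ∈ C)
    (hvA : v ∈ A \ B) : C ⊆ A \ B := by
  intro c hc
  have hr : (G.induce C).Reachable ⟨v, hv⟩ ⟨c, hc⟩ := hconn.preconnected _ _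
  obtain ⟨W⟩ := hr
  refine walk_stays (P := fun x : ↥C => (x : V) ∈ A \ B) ?_ W hvA
  rintro ⟨x, hx⟩ ⟨y, hy⟩ hxA hadj
  have hyS : (y : V) ∉ A ∩ B := hCs hy
  by_cases hyA : (y : V) ∈ A
  · exact ⟨hyA, fun hyB => hyS ⟨hyA, hyB⟩⟩
  · have hyB : (y : V) ∈ B := by
      have := hAB.1
      have : (y : V) ∈ A ∪ B := by rw [this]; trivial
      exact this.resolve_left hyA
    exact absurd hadj (hAB.2 x hxA y ⟨hyB, hyA⟩)

lemma isSep_comp {G : SimpleGraph V} {C S : Set V} (hCs : C ⊆ Sᶜ) (hN : setNbhd G C ⊆ S) :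
    IsSep G (C ∪ S) Cᶜ ∧ (C ∪ S) ∩ Cᶜ = S := by
  have horder : (C ∪ S) ∩ Cᶜ = S := by
    ext x
    simp only [Set.mem_inter_iff, Set.mem_union, Set.mem_compl_iff]
    constructor
    · rintro ⟨hx | hx, hxc⟩
      · exact absurd hx hxc
      · exact hx
    · intro hx; exact ⟨Or.inr hx, fun hxC => hCs hxC hx⟩
  refine ⟨⟨?_, ?_⟩, horder⟩
  · apply Set.eq_univ_of_forall
    intro x
    by_cases hx : x ∈ C
    · exact Or.inl (Or.inl hx)
    · exact Or.inr hx
  · rintro a ⟨haCS, haC⟩ b ⟨hbC, hbCS⟩ hadj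
    simp only [Set.mem_compl_iff, not_not] at haC
    have : b ∈ setNbhd G C := ⟨hbC, a, haC, hadj.symm⟩
    exact hbCS (Or.inr (hN this))


lemma key_lemma (G : SimpleGraph V)
    (Ps : Set (Set (Set V × Set V))) (k m : ℕ)
    (hprof : ∀ P ∈ Ps, Consistent P ∧ P2 P ∧ Principal P ∧
      (∀ p ∈ P, IsSep G p.1 p.2 ∧ (p.1 ∩ p.2).Finite ∧ (p.1 ∩ p.2).ncard < k) ∧
      (∀ A B : Set V, IsSep G A B → (A ∩ B).Finite → (A ∩ B).ncard < k →
        (A, B) ∈ P ∨ (B, A) ∈ P))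
    (hws : ∀ A B : Set V, IsSep G A B → (A ∩ B).Finite → (A ∩ B).ncard = m →
      ∀ C : Set V, IsComponent G (A ∩ B) C → ¬ setNbhd G C ⊂ A ∩ B)
    (Pa Pb : Set (Set V × Set V)) (ha : Pa ∈ Ps) (hb : Pb ∈ Ps)
    (A B : Set V) (hAB : IsSep G A B) (hABf : (A ∩ B).Finite)
    (hABord : (A ∩ B).ncard = m) (hab : (A, B) ∈ Pa) (hba : (B, A) ∈ Pb) :
    ∃ X : Set V, IsComponent G (A ∩ B) X ∧ X ⊆ A \ B ∧
      IsSep G (X ∪ setNbhd G X) Xᶜ ∧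
      ((X ∪ setNbhd G X, Xᶜ) ∈ Pa ∧ (Xᶜ, X ∪ setNbhd G X) ∈ Pb) ∧
      ((X ∪ setNbhd G X) ∩ Xᶜ).ncard = m := by
  obtain ⟨hconsa, -, -, hmema, hcompla⟩ := hprof Pa ha
  obtain ⟨-, -, hprinb, -, hcomplb⟩ := hprof Pb hb
  set S := A ∩ B with hS
  have hmk : m < k := hABord ▸ (hmema _ hab).2.2
  set Q : Set (Set V × Set V) := insert (B, A)
    {p | ∃ C : Set V, IsComponent G S C ∧ C ⊆ A \ B ∧ setNbhd G C ⊆ S ∧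
      (Cᶜ, C ∪ S) ∉ Pb ∧ p = (C ∪ S, Cᶜ)} with hQ
  have hsepC : ∀ C : Set V, C ⊆ A \ B → setNbhd G C ⊆ S →
      IsSep G (C ∪ S) Cᶜ ∧ (C ∪ S) ∩ Cᶜ = S := by
    intro C hCA hN
    exact isSep_comp (fun x hx hxS => (hCA hx).2 hxS.2) hN
  have hQsub : Q ⊆ Pb := by
    rintro p (rfl | ⟨C, hComp, hCA, hN, hnot, rfl⟩)
    · exact hba
    · obtain ⟨hsep, hord⟩ := hsepC C hCA hN
      have hfin : ((C ∪ S) ∩ Cᶜ).Finite := by rw [hord]; exact hABf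
      have hcard : ((C ∪ S) ∩ Cᶜ).ncard < k := by rw [hord, hABord]; exact hmk
      rcases hcomplb _ _ hsep hfin hcard with h | h
      · exact h
      · exact absurd h hnot
  have hQsep : ∀ p ∈ Q, p.1 ∩ p.2 = S := by
    rintro p (rfl | ⟨C, hComp, hCA, hN, hnot, rfl⟩)
    · exact Set.inter_comm B A
    · exact (hsepC C hCA hN).2
  obtain ⟨v, hvQ⟩ := hprinb Q hQsub ⟨(B, A), Set.mem_insert _ _⟩
    (fun p hp q hq => (hQsep p hp).trans (hQsep q hq).symm)
  have hvmem : ∀ p ∈ Q, v ∈ p.2 \ p.1 := fun p hp => Set.mem_iInter₂.mp hvQ p hp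
  have hvAB : v ∈ A \ B := hvmem (B, A) (Set.mem_insert _ _)
  have hvS : v ∉ S := fun h => hvAB.2 h.2
  obtain ⟨C₀, hComp, hvC₀, hN⟩ := exists_component G S hvS
  have hC₀A : C₀ ⊆ A \ B := side_of_component hAB hComp.2.1 hComp.2.2.1 hvC₀ hvAB
  have hPb0 : (C₀ᶜ, C₀ ∪ S) ∈ Pb := by
    by_contra h
    have hmemQ : (C₀ ∪ S, C₀ᶜ) ∈ Q := Or.inr ⟨C₀, hComp, hC₀A, hN, h, rfl⟩
    exact (hvmem _ hmemQ).1 hvC₀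
  have hNS : setNbhd G C₀ = S := by
    by_contra hne
    exact hws A B hAB hABf hABord C₀ hComp (HasSubset.Subset.ssubset_of_ne hN hne)
  obtain ⟨hsep0, hord0⟩ := hsepC C₀ hC₀A hN
  have hPa0 : (C₀ ∪ S, C₀ᶜ) ∈ Pa := by
    have hfin : ((C₀ ∪ S) ∩ C₀ᶜ).Finite := by rw [hord0]; exact hABf
    have hcard : ((C₀ ∪ S) ∩ C₀ᶜ).ncard < k := by rw [hord0, hABord]; exact hmk
    rcases hcompla _ _ hsep0 hfin hcard with h | h
    · exact h
    · exfalso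
      refine hconsa A B (C₀ ∪ S) C₀ᶜ hab ⟨?_, ?_⟩ h
      · rintro x (hx | hx)
        · exact (hC₀A hx).1
        · exact hx.1
      · intro x hx hxC₀
        exact (hC₀A hxC₀).2 hx
  refine ⟨C₀, hComp, hC₀A, ?_, ⟨?_, ?_⟩, ?_⟩ <;> rw [hNS]
  · exact hsep0
  · exact hPa0
  · exact hPb0
  · rw [hord0]; exact hABord


/-- in a well-separable graph, an efficient separation distinguishing two
principal `k`-profiles can be replaced by a component separation `(X ∪ N(X), V ∖ X)`
with `X` a component of `A ∖ B`, which also distinguishes them efficiently. -/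
theorem component_separation_efficient (G : SimpleGraph V)
    (Ps : Set (Set (Set V × Set V))) (k m : ℕ)
    (hprof : ∀ P ∈ Ps, Consistent P ∧ P2 P ∧ Principal P ∧
      (∀ p ∈ P, IsSep G p.1 p.2 ∧ (p.1 ∩ p.2).Finite ∧ (p.1 ∩ p.2).ncard < k) ∧
      (∀ A B : Set V, IsSep G A B → (A ∩ B).Finite → (A ∩ B).ncard < k →
        (A, B) ∈ P ∨ (B, A) ∈ P))
    (hκ : ∀ A B : Set V, IsSep G A B → (A ∩ B).Finite →
      (∃ P ∈ Ps, ∃ P' ∈ Ps, Distinguishes A B P P') → m ≤ (A ∩ B).ncard)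
    (hws : ∀ A B : Set V, IsSep G A B → (A ∩ B).Finite → (A ∩ B).ncard = m →
      ∀ C : Set V, IsComponent G (A ∩ B) C → ¬ setNbhd G C ⊂ A ∩ B)
    (P₁ P₂ : Set (Set V × Set V)) (h1 : P₁ ∈ Ps) (h2 : P₂ ∈ Ps)
    (A B : Set V) (hAB : IsSep G A B) (hABf : (A ∩ B).Finite)
    (hABord : (A ∩ B).ncard = m) (hd : Distinguishes A B P₁ P₂) :
    ∃ X : Set V, IsComponent G (A ∩ B) X ∧ X ⊆ A \ B ∧
      IsSep G (X ∪ setNbhd G X) Xᶜ ∧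
      Distinguishes (X ∪ setNbhd G X) Xᶜ P₁ P₂ ∧
      ((X ∪ setNbhd G X) ∩ Xᶜ).ncard = m := by
  rcases hd with ⟨h12, h21⟩ | ⟨h12, h21⟩
  · obtain ⟨X, hc, hs, hsep, ⟨hp1, hp2⟩, hcard⟩ :=
      key_lemma G Ps k m hprof hws P₁ P₂ h1 h2 A B hAB hABf hABord h12 h21
    exact ⟨X, hc, hs, hsep, Or.inl ⟨hp1, hp2⟩, hcard⟩
  · obtain ⟨X, hc, hs, hsep, ⟨hp1, hp2⟩, hcard⟩ :=
      key_lemma G Ps k m hprof hws P₂ P₁ h2 h1 A B hAB hABf hABord h12 h21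
    exact ⟨X, hc, hs, hsep, Or.inr ⟨hp1, hp2⟩, hcard⟩
end

section
/- Let N be a nested set of separations of a graph G satisfying the finiteness property (*) and define the relation ∼ on N by (A,B) ∼ (C,D) iff (A,B) = (C,D) or (B,A) is a predecessor of (C,D) in the partial order (N, ≤). Then ∼ is an equivalence relation on N. -/
open Set

universe u

variable {V : Type*}

/-- Strict order on separations. -/
def SepLT (p q : Set V × Set V) : Prop := SepLE p.1 p.2 q.1 q.2 ∧ p ≠ q

/-- `p` is a predecessor of `q` in `(N, ≤)`. -/
def IsPred (N : Set (Set V × Set V)) (p q : Set V × Set V) : Prop :=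
  p ∈ N ∧ q ∈ N ∧ SepLT p q ∧ ∀ r ∈ N, ¬ (SepLT p r ∧ SepLT r q)

private lemma rev_eq {x y : Set V × Set V} (h : (x.2, x.1) = y) : (y.2, y.1) = x := by
  obtain ⟨x1, x2⟩ := x; obtain ⟨y1, y2⟩ := y
  simp only [Prod.mk.injEq] at h ⊢
  exact ⟨h.2.symm, h.1.symm⟩

private lemma sepLT_rev {x y : Set V × Set V} (h : SepLT x y) :
    SepLT (y.2, y.1) (x.2, x.1) := by
  refine ⟨⟨h.1.2, h.1.1⟩, fun he => h.2 ?_⟩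
  obtain ⟨x1, x2⟩ := x; obtain ⟨y1, y2⟩ := y
  simp only [Prod.mk.injEq] at he ⊢
  exact ⟨he.2.symm, he.1.symm⟩

/-- the relation `∼` on a nested set `N` of separations satisfying (*),
closed under reversal and containing no small separations, is an equivalence relation. -/
theorem tilde_equivalence (G : SimpleGraph V) (N : Set (Set V × Set V))
    (hsep : ∀ p ∈ N, IsSep G p.1 p.2)
    (hnested : ∀ p ∈ N, ∀ q ∈ N, Nested p.1 p.2 q.1 q.2)
    (hstar : ∀ p ∈ N, ∀ q ∈ N, {r ∈ N | SepLT p r ∧ SepLT r q}.Finite)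
    (hrev : ∀ p ∈ N, (p.2, p.1) ∈ N)
    (hproper : ∀ p ∈ N, ¬ SepLE p.1 p.2 p.2 p.1) :
    Equivalence (fun p q : ↥N =>
      p.val = q.val ∨ IsPred N (p.val.2, p.val.1) q.val) := by
  constructor
  · exact fun p => Or.inl rfl
  · rintro p q (h | ⟨h1, h2, hlt, hmax⟩)
    · exact Or.inl h.symm
    · right
      refine ⟨hrev _ q.prop, p.prop,
        ⟨⟨hlt.1.2, hlt.1.1⟩, fun he => hlt.2 (rev_eq he)⟩, ?_⟩
      rintro x hx ⟨ha, hb⟩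
      exact hmax (x.2, x.1) (hrev x hx) ⟨sepLT_rev hb, sepLT_rev ha⟩
  · rintro p q r (hpq | hpq) (hqr | hqr)
    · exact Or.inl (hpq.trans hqr)
    · right; rw [hpq]; exact hqr
    · right; rw [← hqr]; exact hpq
    · obtain ⟨hBA, hCD, hlt1, hmax1⟩ := hpq
      obtain ⟨hDC, hEF, hlt2, hmax2⟩ := hqr
      have dc_le_ab : SepLE q.val.2 q.val.1 p.val.1 p.val.2 := ⟨hlt1.1.2, hlt1.1.1⟩
      rcases hnested p.val p.prop r.val r.prop with h | h | h | h
      · -- (A,B) ≤ (E,F)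
        by_cases heq : p.val = r.val
        · exact Or.inl heq
        · exact absurd ⟨⟨dc_le_ab, fun he => hlt1.2 (rev_eq he)⟩, ⟨h, heq⟩⟩
            (hmax2 p.val p.prop)
      · -- (E,F) ≤ (A,B)
        by_cases heq : p.val = r.val
        · exact Or.inl heq
        · refine absurd ⟨⟨⟨h.2, h.1⟩, fun he => heq ?_⟩,
            ⟨⟨hlt2.1.2, hlt2.1.1⟩, fun he => hlt2.2 (rev_eq he)⟩⟩
            (hmax1 (r.val.2, r.val.1) (hrev r.val r.prop))
          exact (rev_eq he).symm
      · -- (A,B) ≤ (F,E) : contradiction via hproper on (D,C)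
        exact absurd ⟨(hlt2.1.1.trans h.2).trans hlt1.1.1,
          (hlt2.1.1.trans h.2).trans hlt1.1.1⟩ (hproper _ (hrev _ q.prop))
      · -- (F,E) ≤ (A,B), i.e. (B,A) ≤ (E,F)
        right
        refine ⟨hrev _ p.prop, r.prop, ⟨⟨h.2, h.1⟩, ?_⟩, ?_⟩
        · intro he
          have e1 : p.val.2 = r.val.1 := congrArg Prod.fst he
          have hBC : p.val.2 ⊆ q.val.1 := hlt1.1.1
          rw [e1] at hBC
          exact hproper _ (hrev _ q.prop) ⟨hlt2.1.1.trans hBC, hlt2.1.1.trans hBC⟩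
        · rintro x hx ⟨hx1, hx2⟩
          rcases hnested x hx q.val q.prop with hc | hc | hc | hc
          · by_cases hxq : x = q.val
            · have hCE : x.1 ⊆ r.val.1 := hx2.1.1
              rw [hxq] at hCE
              exact hproper _ (hrev _ r.prop)
                ⟨hlt2.1.2.trans hCE, hlt2.1.2.trans hCE⟩
            · exact hmax1 x hx ⟨hx1, ⟨hc, hxq⟩⟩
          · have hs : r.val.2 ⊆ r.val.1 := hlt2.1.2.trans (hc.1.trans hx2.1.1)
            exact hproper _ (hrev _ r.prop) ⟨hs, hs⟩
          · have hs : p.val.2 ⊆ p.val.1 := hx1.1.1.trans (hc.1.trans hlt1.1.2)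
            exact hproper _ (hrev _ p.prop) ⟨hs, hs⟩
          · by_cases hxq : (q.val.2, q.val.1) = x
            · have e : q.val.2 = x.1 := congrArg Prod.fst hxq
              have hsub : p.val.2 ⊆ q.val.2 := by rw [e]; exact hx1.1.1
              exact hproper _ (hrev _ p.prop)
                ⟨hsub.trans hlt1.1.2, hsub.trans hlt1.1.2⟩
            · exact hmax2 x hx ⟨⟨hc, hxq⟩, hx2⟩
end

section
/- Let (T,𝒱) be a tree-decomposition of a graph G, let t ∈ V(T), let H be the torso of V_t, and let (A,B) be a separation of G that does not separate any adhesion set contained in V_t. Then (A ∩ V_t, B ∩ V_t) is a separation of the torso H, provided that all separations induced by edges of T are proper and that for every adhesion set S of (T,𝒱) and every component C of G−S we have N(C) = S. -/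
open Set

universe u

variable {V : Type*}

/-- a separation of `G` not separating any adhesion set at `t` induces a
separation of the torso of `V_t`, provided induced separations are proper and every
component of the complement of an adhesion set has the full adhesion set as
neighbourhood. -/
theorem separation_induces_torso_separation {τ : Type*} (G : SimpleGraph V)
    (T : SimpleGraph τ) (td : TreeDecomp G T) (t : τ)
    (hproper : ∀ s s' : τ, T.Adj s s' →
      (sideSet td s s' \ sideSet td s' s).Nonempty ∧
      (sideSet td s' s \ sideSet td s s').Nonempty)
    (hadh : ∀ s s' : τ, T.Adj s s' → ∀ C : Set V,
      IsComponent G (td.bag s ∩ td.bag s') C → setNbhd G C = td.bag s ∩ td.bag s')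
    (A B : Set V) (hAB : IsSep G A B)
    (hns : ∀ t' : τ, T.Adj t t' →
      ¬ (((td.bag t ∩ td.bag t') ∩ (A \ B)).Nonempty ∧
         ((td.bag t ∩ td.bag t') ∩ (B \ A)).Nonempty)) :
    (A ∩ td.bag t) ∪ (B ∩ td.bag t) = td.bag t ∧
    ∀ a ∈ (A ∩ td.bag t) \ (B ∩ td.bag t), ∀ b ∈ (B ∩ td.bag t) \ (A ∩ td.bag t),
      ¬ (torso G T td t).Adj a b := by
  constructor
  · rw [← Set.union_inter_distrib_right, hAB.1, Set.univ_inter]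
  · rintro a ⟨⟨haA, hat⟩, haB⟩ b ⟨⟨hbB, hbt⟩, hbA⟩ ⟨hne, h1, h2, hadj⟩
    have haB' : a ∉ B := fun h => haB ⟨h, hat⟩
    have hbA' : b ∉ A := fun h => hbA ⟨h, hbt⟩
    rcases hadj with h | ⟨t', ht', hx, hy⟩
    · exact hAB.2 a ⟨haA, haB'⟩ b ⟨hbB, hbA'⟩ h
    · exact hns t' ht' ⟨⟨a, ⟨hat, hx⟩, haA, haB'⟩, ⟨b, ⟨hbt, hy⟩, hbB, hbA'⟩⟩
end
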